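/- Let I ⊆ S be a bihomogeneous ideal and (a,b) ∈ Z_{>0} × Z_{≥0} with a > 1. For k = 0,…,n set J_{k−1} = (I, x_0,…,x_{k−1}) (with J_{−1} = I). If (in(J_{k−1}) : x_k)_{(a−1,b)} = (in(J_{k−1}) + m_y·(in(J_{k−1}) : x_k))_{(a−1,b)} for all k = 0,…,n, then in(I) has no minimal generator of bidegree (a,b). -/

import Mathlib

open MvPolynomial Finset

noncomputable section

namespace Bigraded

/-- The variables of `S = k[x_0,…,x_n, y_0,…,y_m]`: `Sum.inl i` is `x_i`, `Sum.inr j` is `y_j`. -/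
abbrev Vars (n m : ℕ) : Type := Fin (n + 1) ⊕ Fin (m + 1)

/-- The bigraded polynomial ring `S = k[x_0,…,x_n, y_0,…,y_m]`. -/
abbrev PolyS (K : Type) [CommSemiring K] (n m : ℕ) : Type := MvPolynomial (Vars n m) K

/-- The Laurent polynomial ring in the same variables, receiving all localizations of `S`
at products of the variables. -/
abbrev Laur (K : Type) [CommSemiring K] (n m : ℕ) : Type := AddMonoidAlgebra K (Vars n m → ℤ)

variable (K : Type) [Field K] (n m : ℕ)

/-- The bidegree of an exponent vector: total degree in the `x`-variables and in the
`y`-variables. -/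
def bdeg (d : Vars n m →₀ ℕ) : ℤ × ℤ :=
  (∑ i : Fin (n + 1), (d (Sum.inl i) : ℤ), ∑ j : Fin (m + 1), (d (Sum.inr j) : ℤ))

/-- `p` is bihomogeneous of bidegree `(a, b)`. -/
def IsBihomOf (p : PolyS K n m) (a b : ℤ) : Prop :=
  ∀ d ∈ p.support, bdeg n m d = (a, b)

/-- `p` is bihomogeneous (of some bidegree). -/
def IsBihom (p : PolyS K n m) : Prop := ∃ a b : ℤ, IsBihomOf K n m p a b

/-- A bihomogeneous ideal: an ideal generated by bihomogeneous polynomials. -/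
def IsBihomIdeal (I : Ideal (PolyS K n m)) : Prop :=
  ∃ G : Set (PolyS K n m), (∀ g ∈ G, IsBihom K n m g) ∧ I = Ideal.span G

/-- The ideal `m_x = (x_0, …, x_n)`. -/
def mxI : Ideal (PolyS K n m) :=
  Ideal.span (Set.range fun i : Fin (n + 1) => (X (Sum.inl i) : PolyS K n m))

/-- The ideal `m_y = (y_0, …, y_m)`. -/
def myI : Ideal (PolyS K n m) :=
  Ideal.span (Set.range fun j : Fin (m + 1) => (X (Sum.inr j) : PolyS K n m))

/-- Equality of the bidegree-`(a,b)` components of two ideals: `I_{(a,b)} = J_{(a,b)}`. -/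
def eqInDeg (I J : Ideal (PolyS K n m)) (a b : ℤ) : Prop :=
  ∀ p : PolyS K n m, IsBihomOf K n m p a b → (p ∈ I ↔ p ∈ J)

/-- The colon ideal `(I : h)`. -/
def colonF (I : Ideal (PolyS K n m)) (h : PolyS K n m) : Ideal (PolyS K n m) :=
  Submodule.colon I (Ideal.span {h})

/-- The saturation `I^xsat = (I : m_x^∞)` of `I` with respect to `m_x`. -/
def xsat (I : Ideal (PolyS K n m)) : Ideal (PolyS K n m) :=
  ⨆ t : ℕ, Submodule.colon I (((mxI K n m) ^ t : Ideal (PolyS K n m)) : Set (PolyS K n m))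

/-- Vanishing of the bigraded Hilbert function of `S/I` at `(a,b)`, i.e.
`dim_k (S/I)_{(a,b)} = 0`, i.e. `S_{(a,b)} ⊆ I`. -/
def HFvanish (I : Ideal (PolyS K n m)) (a b : ℤ) : Prop :=
  ∀ p : PolyS K n m, IsBihomOf K n m p a b → p ∈ I

/-- `J` has a minimal generator of bidegree `(a,b)`, i.e. `J_{(a,b)} ≠ ((m_x + m_y)·J)_{(a,b)}`. -/
def HasMinGen (J : Ideal (PolyS K n m)) (a b : ℤ) : Prop :=
  ¬ eqInDeg K n m J ((mxI K n m ⊔ myI K n m) * J) a b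

/-- Position of a variable in the order `x_0, …, x_n, y_0, …, y_m`. -/
def idx : Vars n m → ℕ := Sum.elim (fun i => (i : ℕ)) (fun j => n + 1 + (j : ℕ))

/-- The degree reverse lexicographical comparison (for exponents of the same bidegree):
`x^d < x^e` iff the leftmost nonzero entry of `e - d` is negative. -/
def drlLT (d e : Vars n m →₀ ℕ) : Prop :=
  ∃ s : Vars n m, ((e s : ℤ) < (d s : ℤ)) ∧ ∀ t : Vars n m, idx n m t < idx n m s → e t = d t

/-- `monomial d 1` is the initial (leading) monomial of `f` for the DRL order with
`x_0 < … < x_n < y_0 < … < y_m`. -/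
def IsLead (f : PolyS K n m) (d : Vars n m →₀ ℕ) : Prop :=
  d ∈ f.support ∧ ∀ e ∈ f.support, e ≠ d → drlLT n m e d

/-- The initial ideal `in(I)` of a bihomogeneous ideal `I` for the DRL order
with `x_0 < … < x_n < y_0 < … < y_m`. -/
def inIdeal (I : Ideal (PolyS K n m)) : Ideal (PolyS K n m) :=
  Ideal.span {q : PolyS K n m | ∃ f ∈ I, ∃ d : Vars n m →₀ ℕ,
    IsBihom K n m f ∧ IsLead K n m f d ∧ q = monomial d (1 : K)}

/-- The linear `x`-form `∑ c_i x_i`. -/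
def xform (c : Fin (n + 1) → K) : PolyS K n m :=
  ∑ i : Fin (n + 1), MvPolynomial.C (c i) * X (Sum.inl i)

/-- `Q` holds for generic linear `x`-forms `h_0, …, h_{k-1}`, i.e. for all tuples in a nonempty
Zariski-open subset of `(S_{(1,0)})^k` (encoded by the non-vanishing of a nonzero polynomial
in the coefficients). -/
def GenericXForms (k : ℕ) (Q : (Fin k → PolyS K n m) → Prop) : Prop :=
  ∃ P : MvPolynomial (Fin k × Fin (n + 1)) K, P ≠ 0 ∧
    ∀ c : Fin k → Fin (n + 1) → K,
      MvPolynomial.eval (fun p => c p.1 p.2) P ≠ 0 → Q (fun j => xform K n m (c j))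

/-- The change of coordinates on `S` given by a pair of square matrices, acting on the
`x`-variables and the `y`-variables separately. -/
def uAlg (A : Matrix (Fin (n + 1)) (Fin (n + 1)) K) (B : Matrix (Fin (m + 1)) (Fin (m + 1)) K) :
    PolyS K n m →ₐ[K] PolyS K n m :=
  MvPolynomial.aeval (Sum.elim
    (fun i => ∑ j : Fin (n + 1), MvPolynomial.C (A i j) * X (Sum.inl j))
    (fun i => ∑ j : Fin (m + 1), MvPolynomial.C (B i j) * X (Sum.inr j)))

/-- `Q` holds for a generic pair of matrices `(A, B) ∈ GL(n+1) × GL(m+1)`, i.e. on a nonempty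
Zariski-open subset of `GL(n+1) × GL(m+1)` (encoded by the non-vanishing of a polynomial in the
entries which does not vanish identically on `GL(n+1) × GL(m+1)`). -/
def GenericPair
    (Q : Matrix (Fin (n + 1)) (Fin (n + 1)) K → Matrix (Fin (m + 1)) (Fin (m + 1)) K → Prop) :
    Prop :=
  ∃ P : MvPolynomial ((Fin (n + 1) × Fin (n + 1)) ⊕ (Fin (m + 1) × Fin (m + 1))) K,
    (∃ (A : Matrix (Fin (n + 1)) (Fin (n + 1)) K) (B : Matrix (Fin (m + 1)) (Fin (m + 1)) K),
      IsUnit A.det ∧ IsUnit B.det ∧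
      MvPolynomial.eval (Sum.elim (fun p => A p.1 p.2) (fun p => B p.1 p.2)) P ≠ 0) ∧
    ∀ (A : Matrix (Fin (n + 1)) (Fin (n + 1)) K) (B : Matrix (Fin (m + 1)) (Fin (m + 1)) K),
      IsUnit A.det → IsUnit B.det →
      MvPolynomial.eval (Sum.elim (fun p => A p.1 p.2) (fun p => B p.1 p.2)) P ≠ 0 → Q A B

/-- `Bg` is the bigeneric initial ideal of `I`: for all `u = (A,B)` in a nonempty Zariski-open
subset of `GL(n+1) × GL(m+1)` one has `in(u ∘ I) = Bg`, for the DRL order with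
`x_0 < … < x_n < y_0 < … < y_m`. -/
def IsBigin (I Bg : Ideal (PolyS K n m)) : Prop :=
  GenericPair K n m (fun A B => inIdeal K n m (Ideal.map (uAlg K n m A B) I) = Bg)

/-- The canonical embedding of `S` into the Laurent polynomial ring. -/
def toLaur : PolyS K n m →ₐ[K] Laur K n m :=
  MvPolynomial.aeval (fun s : Vars n m =>
    (AddMonoidAlgebra.single (Pi.single s (1 : ℤ)) (1 : K) : Laur K n m))

/-- The bidegree of a Laurent exponent vector. -/
def ldeg (v : Vars n m → ℤ) : ℤ × ℤ :=
  (∑ i : Fin (n + 1), v (Sum.inl i), ∑ j : Fin (m + 1), v (Sum.inr j))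

/-- A Laurent polynomial is bihomogeneous of bidegree `(a, b)`. -/
def LHom (z : Laur K n m) (a b : ℤ) : Prop :=
  ∀ v ∈ z.coeff.support, ldeg n m v = (a, b)

/-- Membership in the image of the localization `I_{g_T}` inside the Laurent polynomials, where
`g_T = ∏_{k ∈ T} g_k` and the monomial generator `g_k` has exponent vector `E k`:
`z ∈ I_{g_T}` iff `g_T^t · z` comes from `I` for some `t`. -/
def memD {N : ℕ} (E : Fin N → Vars n m → ℤ) (I : Ideal (PolyS K n m))
    (T : Finset (Fin N)) (z : Laur K n m) : Prop :=
  ∃ (t : ℕ) (w : PolyS K n m), w ∈ I ∧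
    (AddMonoidAlgebra.single ((t : ℤ) • ∑ k ∈ T, E k) (1 : K) : Laur K n m) * z = toLaur K n m w

/-- The Čech differential (all localizations being viewed inside the Laurent polynomials,
the component maps are the identity, with the usual signs). -/
def dC {N : ℕ} (c : Finset (Fin N) → Laur K n m) (T : Finset (Fin N)) : Laur K n m :=
  ∑ j ∈ T, ((-1 : ℤ) ^ ((T.filter (fun i => i < j)).card)) • c (T.erase j)

/-- Vanishing of the bidegree-`(a,b)` component of the `i`-th Čech cohomology of `I` with respect
to the monomial generators with exponents `E 0, …, E (N-1)` (for `i ≥ 1` this is the vanishing of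
`H^i_J(I)_{(a,b)}` where `J` is generated by these monomials): every bihomogeneous cocycle of
bidegree `(a,b)` in Čech degree `i` is a coboundary. -/
def cechVanish {N : ℕ} (E : Fin N → Vars n m → ℤ) (I : Ideal (PolyS K n m))
    (i : ℕ) (a b : ℤ) : Prop :=
  ∀ c : Finset (Fin N) → Laur K n m,
    (∀ T, T.card = i → memD K n m E I T (c T) ∧ LHom K n m (c T) a b) →
    (∀ T, T.card ≠ i → c T = 0) →
    (∀ T, T.card = i + 1 → dC K n m c T = 0) →
    ∃ c' : Finset (Fin N) → Laur K n m,
      (∀ T, T.card + 1 = i → memD K n m E I T (c' T)) ∧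
      (∀ T, T.card + 1 ≠ i → c' T = 0) ∧
      (∀ T, T.card = i → dC K n m c' T = c T)

/-- Exponent vectors of the generators `x_0, …, x_n` of `m_x`. -/
def Ex : Fin (n + 1) → Vars n m → ℤ := fun k =>
  Sum.elim (fun i => if i = k then 1 else 0) (fun _ => 0)

/-- Exponent vectors of the generators `x_i y_j` of the irrelevant ideal `b = m_x · m_y`. -/
def Eb : Fin ((n + 1) * (m + 1)) → Vars n m → ℤ := fun k =>
  Sum.elim (fun i => if i = (finProdFinEquiv.symm k).1 then 1 else 0)
           (fun j => if j = (finProdFinEquiv.symm k).2 then 1 else 0)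

/-- `H^i_{m_x}(I)_{(a,b)} = 0` (for `i ≥ 1`), via the Čech complex on `x_0, …, x_n`. -/
def lcxVanish (I : Ideal (PolyS K n m)) (i : ℕ) (a b : ℤ) : Prop :=
  cechVanish K n m (Ex n m) I i a b

/-- `H^i_b(I)_{(a,b)} = 0` (for `i ≥ 1`), via the Čech complex on the `x_i y_j`. -/
def lcbVanish (I : Ideal (PolyS K n m)) (i : ℕ) (a b : ℤ) : Prop :=
  cechVanish K n m (Eb n m) I i a b

/-- The partial regularity region `xreg(I)`: all `(a,b)` such that `H^i_{m_x}(I)_{(a',b')} = 0`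
for all `i ≥ 1` and all `(a',b') ≥ (a - i + 1, b)`. -/
def xreg (I : Ideal (PolyS K n m)) : Set (ℤ × ℤ) :=
  {ab | ∀ i : ℕ, 1 ≤ i → ∀ a' b' : ℤ, ab.1 - (i : ℤ) + 1 ≤ a' → ab.2 ≤ b' →
    lcxVanish K n m I i a' b'}

/-- The bigraded Castelnuovo–Mumford regularity region of Maclagan–Smith: all `(a,b)` such that
`H^i_b(I)_{(a',b')} = 0` for all `i ≥ 1`, all `λ_x + λ_y = i - 1` and all
`(a',b') ≥ (a - λ_x, b - λ_y)`. -/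
def regMS (I : Ideal (PolyS K n m)) : Set (ℤ × ℤ) :=
  {ab | ∀ i : ℕ, 1 ≤ i → ∀ lx ly : ℕ, lx + ly + 1 = i →
    ∀ a' b' : ℤ, ab.1 - (lx : ℤ) ≤ a' → ab.2 - (ly : ℤ) ≤ b' →
      lcbVanish K n m I i a' b'}

/-- The cohomological dimension `cd_{m_x}(I) = max({0} ∪ {i > 0 : H^i_{m_x}(I) ≠ 0})`. -/
def cdx (I : Ideal (PolyS K n m)) : ℕ :=
  sSup ({0} ∪ {i : ℕ | 0 < i ∧ ∃ a b : ℤ, ¬ lcxVanish K n m I i a b})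

/-- The ideal generated by the variables `x_0, …, x_{k-1}`. -/
def firstXVars (k : ℕ) : Ideal (PolyS K n m) :=
  Ideal.span {g : PolyS K n m | ∃ j : Fin (n + 1), (j : ℕ) < k ∧ g = X (Sum.inl j)}

/-- The ideal generated by `h_0, …, h_{k-1}`. -/
def firstForms {N : ℕ} (h : Fin N → PolyS K n m) (k : ℕ) : Ideal (PolyS K n m) :=
  Ideal.span {g : PolyS K n m | ∃ j : Fin N, (j : ℕ) < k ∧ g = h j}


namespace Aux

variable (K : Type) [Field K] (n m : ℕ)

/-- The weight function giving the bigrading. -/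
def wt : Vars n m → ℤ × ℤ := Sum.elim (fun _ => ((1 : ℤ), (0 : ℤ))) (fun _ => ((0 : ℤ), (1 : ℤ)))

lemma weight_eq (d : Vars n m →₀ ℕ) : Finsupp.weight (wt n m) d = bdeg n m d := by
  rw [Finsupp.weight_apply, Finsupp.sum_fintype _ _ (by simp)]
  rw [Fintype.sum_sum_type]
  unfold wt bdeg
  ext <;> simp [Prod.fst_sum, Prod.snd_sum]

lemma isBihomOf_iff (p : PolyS K n m) (a b : ℤ) :
    IsBihomOf K n m p a b ↔ p.IsWeightedHomogeneous (wt n m) (a, b) := by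
  unfold IsBihomOf MvPolynomial.IsWeightedHomogeneous
  constructor
  · intro h d hd; rw [weight_eq]; exact h d (MvPolynomial.mem_support_iff.mpr hd)
  · intro h d hd; rw [← weight_eq]; exact h (MvPolynomial.mem_support_iff.mp hd)

lemma component_mem_of_bihom (I : Ideal (PolyS K n m)) (hI : IsBihomIdeal K n m I)
    (c : ℤ × ℤ) (p : PolyS K n m) (hp : p ∈ I) :
    MvPolynomial.weightedHomogeneousComponent (wt n m) c p ∈ I := by
  letI : GradedAlgebra (MvPolynomial.weightedHomogeneousSubmodule K (wt n m)) :=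
    MvPolynomial.weightedGradedAlgebra K (wt n m)
  obtain ⟨G, hG, rfl⟩ := hI
  have hhom : Ideal.IsHomogeneous (MvPolynomial.weightedHomogeneousSubmodule K (wt n m))
      (Ideal.span G) := by
    apply Ideal.homogeneous_span
    intro g hg
    obtain ⟨a, b, hab⟩ := hG g hg
    exact ⟨(a, b), (isBihomOf_iff K n m g a b).mp hab⟩
  have := hhom c hp
  rwa [show ((DirectSum.decompose
      (MvPolynomial.weightedHomogeneousSubmodule K (wt n m)) p c : _) : PolyS K n m)
      = MvPolynomial.weightedHomogeneousComponent (wt n m) c p from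
    MvPolynomial.decompose'_apply K (wt n m) p c] at this

/-- The set of lead exponents of bihomogeneous elements of `I`. -/
def inSet (I : Ideal (PolyS K n m)) : Set (Vars n m →₀ ℕ) :=
  {d | ∃ f ∈ I, IsBihom K n m f ∧ IsLead K n m f d}

lemma inIdeal_eq_span (I : Ideal (PolyS K n m)) :
    inIdeal K n m I
      = Ideal.span ((fun d => MvPolynomial.monomial d (1 : K)) '' inSet K n m I) := by
  unfold inIdeal inSet
  congr 1
  ext q
  simp only [Set.mem_image, Set.mem_setOf_eq]
  constructor
  · rintro ⟨f, hf, d, h1, h2, rfl⟩; exact ⟨d, ⟨f, hf, h1, h2⟩, rfl⟩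
  · rintro ⟨d, ⟨f, hf, h1, h2⟩, rfl⟩; exact ⟨f, hf, d, h1, h2, rfl⟩

lemma monomial_mem_span_iff {S : Set (Vars n m →₀ ℕ)} {e : Vars n m →₀ ℕ} :
    MvPolynomial.monomial e (1 : K)
        ∈ Ideal.span ((fun d => MvPolynomial.monomial d (1 : K)) '' S)
      ↔ ∃ s ∈ S, s ≤ e := by
  rw [MvPolynomial.mem_ideal_span_monomial_image]
  simp [MvPolynomial.support_monomial]

lemma mem_span_monomial_of_support {S : Set (Vars n m →₀ ℕ)} {p : PolyS K n m}
    (h : ∀ e ∈ p.support, ∃ s ∈ S, s ≤ e) :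
    p ∈ Ideal.span ((fun d => MvPolynomial.monomial d (1 : K)) '' S) :=
  MvPolynomial.mem_ideal_span_monomial_image.mpr h

/-- Exponent sets of the `x`-variable generators. -/
def xSet (k : ℕ) : Set (Vars n m →₀ ℕ) :=
  {e | ∃ j : Fin (n + 1), (j : ℕ) < k ∧ e = Finsupp.single (Sum.inl j) 1}

lemma firstXVars_eq_span (k : ℕ) :
    firstXVars K n m k
      = Ideal.span ((fun d => MvPolynomial.monomial d (1 : K)) '' xSet n m k) := by
  unfold firstXVars xSet
  congr 1
  ext q
  simp only [Set.mem_image, Set.mem_setOf_eq]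
  constructor
  · rintro ⟨j, hj, rfl⟩; exact ⟨Finsupp.single (Sum.inl j) 1, ⟨j, hj, rfl⟩, rfl⟩
  · rintro ⟨d, ⟨j, hj, rfl⟩, rfl⟩; exact ⟨j, hj, rfl⟩

end Aux

namespace Aux

variable (K : Type) [Field K] (n m : ℕ)

/-- Comparison helper: if `d` vanishes on `x_j` for `j < k`, and `e` has some `x_j`, `j < k`,
then `e <_drl d`. -/
lemma drl_of_small (k : ℕ) (d e : Vars n m →₀ ℕ)
    (hd : ∀ j : Fin (n + 1), (j : ℕ) < k → d (Sum.inl j) = 0)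
    (he : ∃ j : Fin (n + 1), (j : ℕ) < k ∧ e (Sum.inl j) ≠ 0) :
    drlLT n m e d := by
  classical
  obtain ⟨j0, hj0k, hj0⟩ := he
  set F : Finset (Fin (n + 1)) := Finset.univ.filter (fun i => e (Sum.inl i) ≠ 0) with hF
  have hFne : F.Nonempty := ⟨j0, by simp [hF, hj0]⟩
  set i := F.min' hFne with hi
  have hiF : i ∈ F := F.min'_mem hFne
  have hie : e (Sum.inl i) ≠ 0 := by simpa [hF] using hiF
  have hik : (i : ℕ) < k := lt_of_le_of_lt
    (by exact_mod_cast F.min'_le j0 (by simp [hF, hj0])) hj0k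
  have hmin : ∀ j : Fin (n + 1), j < i → e (Sum.inl j) = 0 := by
    intro j hj
    by_contra hne
    exact absurd (F.min'_le j (by simp [hF, hne])) (not_le.mpr hj)
  refine ⟨Sum.inl i, ?_, ?_⟩
  · have : d (Sum.inl i) = 0 := hd i hik
    simp only [this]
    exact_mod_cast Nat.pos_of_ne_zero hie
  · intro t ht
    rcases t with j | j
    · have hji : j < i := by
        have hval : (j : ℕ) < (i : ℕ) := by
          simp only [idx, Sum.elim_inl] at ht; exact ht
        exact hval
      rw [hmin j hji, hd j (lt_trans (by exact_mod_cast hji) hik)]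
    · exfalso
      simp only [idx, Sum.elim_inl, Sum.elim_inr] at ht
      omega

/-- Key revlex lemma: a lead exponent of a bihomogeneous element of `I + (x_0,…,x_{k-1})`
involving none of `x_0,…,x_{k-1}` is a lead exponent coming from `I` itself. -/
lemma leadA (I : Ideal (PolyS K n m)) (hI : IsBihomIdeal K n m I) (k : ℕ)
    (d : Vars n m →₀ ℕ) (hd : d ∈ inSet K n m (I ⊔ firstXVars K n m k))
    (hdx : ∀ j : Fin (n + 1), (j : ℕ) < k → d (Sum.inl j) = 0) :
    MvPolynomial.monomial d (1 : K) ∈ inIdeal K n m I := by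
  classical
  obtain ⟨f, hf, ⟨A, B, hAB⟩, hlead⟩ := hd
  obtain ⟨p, hp, q, hq, hpq⟩ := Submodule.mem_sup.mp hf
  set comp : PolyS K n m →ₗ[K] PolyS K n m :=
    MvPolynomial.weightedHomogeneousComponent (wt n m) (A, B) with hcomp
  have hfhom : f.IsWeightedHomogeneous (wt n m) (A, B) := (isBihomOf_iff K n m f A B).mp hAB
  have hcf : comp f = f := hfhom.weightedHomogeneousComponent_same
  have hp' : comp p ∈ I := component_mem_of_bihom K n m I hI (A, B) p hp
  -- support facts about q
  have hqsup : ∀ e ∈ q.support, ∃ j : Fin (n + 1), (j : ℕ) < k ∧ e (Sum.inl j) ≠ 0 := by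
    intro e he
    rw [firstXVars_eq_span] at hq
    obtain ⟨s, ⟨j, hj, rfl⟩, hs⟩ := MvPolynomial.mem_ideal_span_monomial_image.mp hq e he
    refine ⟨j, hj, ?_⟩
    have := Finsupp.single_le_iff.mp hs
    omega
  have hcq_sup : (comp q).support ⊆ q.support := by
    intro e he
    rw [MvPolynomial.mem_support_iff] at he ⊢
    intro h0
    rw [hcomp, MvPolynomial.coeff_weightedHomogeneousComponent] at he
    split at he
    · exact he h0
    · exact he rfl
  have hcq : comp q ∈ firstXVars K n m k := by
    rw [firstXVars_eq_span]
    apply mem_span_monomial_of_support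
    intro e he
    obtain ⟨j, hj, hne⟩ := hqsup e (hcq_sup he)
    exact ⟨Finsupp.single (Sum.inl j) 1, ⟨j, hj, rfl⟩,
      Finsupp.single_le_iff.mpr (Nat.one_le_iff_ne_zero.mpr hne)⟩
  -- the candidate element of I
  set p' := comp p with hp'def
  have hsplit : f = p' + comp q := by
    rw [hp'def, ← map_add, hpq, hcf]
  -- d has coeff in p'
  have hdq : d ∉ (comp q).support := by
    intro hmem
    obtain ⟨j, hj, hne⟩ := hqsup d (hcq_sup hmem)
    exact hne (hdx j hj)
  have hdcoeff : MvPolynomial.coeff d p' = MvPolynomial.coeff d f := by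
    have := congrArg (MvPolynomial.coeff d) hsplit
    rw [MvPolynomial.coeff_add, MvPolynomial.notMem_support_iff.mp hdq, add_zero] at this
    exact this.symm
  have hdsup : d ∈ p'.support := by
    rw [MvPolynomial.mem_support_iff, hdcoeff]
    exact MvPolynomial.mem_support_iff.mp hlead.1
  have hsupsub : p'.support ⊆ f.support ∪ (comp q).support := by
    intro e he
    by_contra hno
    rw [Finset.mem_union] at hno
    push_neg at hno
    rw [MvPolynomial.mem_support_iff] at he
    apply he
    have h1 := MvPolynomial.notMem_support_iff.mp hno.1
    have h2 := MvPolynomial.notMem_support_iff.mp hno.2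
    have := congrArg (MvPolynomial.coeff e) hsplit
    rw [MvPolynomial.coeff_add, h1, h2, add_zero] at this
    exact this.symm
  have hbihom' : IsBihomOf K n m p' A B :=
    (isBihomOf_iff K n m p' A B).mpr
      (MvPolynomial.weightedHomogeneousComponent_isWeightedHomogeneous (A, B) p)
  have hlead' : IsLead K n m p' d := by
    refine ⟨hdsup, ?_⟩
    intro e he hne
    rcases Finset.mem_union.mp (hsupsub he) with hef | heq
    · exact hlead.2 e hef hne
    · exact drl_of_small n m k d e hdx (hqsup e (hcq_sup heq))
  exact Ideal.subset_span ⟨p', hp', d, ⟨A, B, hbihom'⟩, hlead', rfl⟩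

end Aux

namespace Aux

variable (K : Type) [Field K] (n m : ℕ)

lemma bdeg_add (u v : Vars n m →₀ ℕ) : bdeg n m (u + v) = bdeg n m u + bdeg n m v := by
  unfold bdeg
  simp only [Finsupp.add_apply, Prod.mk_add_mk, Prod.mk.injEq]
  constructor <;> · push_cast; rw [Finset.sum_add_distrib]

lemma bdeg_single_x (i : Fin (n + 1)) :
    bdeg n m (Finsupp.single (Sum.inl i) 1) = (1, 0) := by
  unfold bdeg
  simp [Finsupp.single_apply, Sum.inl.injEq]

lemma bdeg_single_y (j : Fin (m + 1)) :
    bdeg n m (Finsupp.single (Sum.inr j) 1) = (0, 1) := by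
  unfold bdeg
  simp [Finsupp.single_apply]

lemma X_mem_sup (s : Vars n m) : (MvPolynomial.X s : PolyS K n m) ∈ mxI K n m ⊔ myI K n m := by
  rcases s with i | j
  · exact le_sup_left (α := Ideal (PolyS K n m))
      (Ideal.subset_span ⟨i, rfl⟩)
  · exact le_sup_right (α := Ideal (PolyS K n m))
      (Ideal.subset_span ⟨j, rfl⟩)

lemma mem_mul_of (I : Ideal (PolyS K n m)) (u d : Vars n m →₀ ℕ) (s : Vars n m)
    (hu : MvPolynomial.monomial u (1 : K) ∈ inIdeal K n m I)
    (h : Finsupp.single s 1 + u ≤ d) :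
    MvPolynomial.monomial d (1 : K) ∈ (mxI K n m ⊔ myI K n m) * inIdeal K n m I := by
  have hX : (MvPolynomial.X s : PolyS K n m) * MvPolynomial.monomial u (1 : K)
      = MvPolynomial.monomial (Finsupp.single s 1 + u) (1 : K) := by
    rw [show (MvPolynomial.X s : PolyS K n m)
        = MvPolynomial.monomial (Finsupp.single s 1) 1 from rfl,
      MvPolynomial.monomial_mul, one_mul]
  have hmem : (MvPolynomial.X s : PolyS K n m) * MvPolynomial.monomial u (1 : K)
      ∈ (mxI K n m ⊔ myI K n m) * inIdeal K n m I :=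
    Ideal.mul_mem_mul (X_mem_sup K n m s) hu
  have hd : d = (d - (Finsupp.single s 1 + u)) + (Finsupp.single s 1 + u) :=
    (tsub_add_cancel_of_le h).symm
  have heq : MvPolynomial.monomial d (1 : K)
      = MvPolynomial.monomial (d - (Finsupp.single s 1 + u)) (1 : K)
        * ((MvPolynomial.X s : PolyS K n m) * MvPolynomial.monomial u (1 : K)) := by
    rw [hX, MvPolynomial.monomial_mul, one_mul, ← hd]
  rw [heq]
  exact Ideal.mul_mem_left _ _ hmem

lemma myI_eq_span :
    myI K n m = Ideal.span ((fun d => MvPolynomial.monomial d (1 : K)) ''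
      {e | ∃ j : Fin (m + 1), e = Finsupp.single (Sum.inr j) 1}) := by
  unfold myI
  congr 1
  ext q
  simp only [Set.mem_range, Set.mem_image, Set.mem_setOf_eq]
  constructor
  · rintro ⟨j, rfl⟩; exact ⟨Finsupp.single (Sum.inr j) 1, ⟨j, rfl⟩, rfl⟩
  · rintro ⟨e, ⟨j, rfl⟩, rfl⟩; exact ⟨j, rfl⟩

lemma inSet_mono (I J : Ideal (PolyS K n m)) (h : I ≤ J) :
    inSet K n m I ⊆ inSet K n m J := by
  rintro d ⟨f, hf, h1, h2⟩
  exact ⟨f, h hf, h1, h2⟩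

lemma colon_le_span (J : Ideal (PolyS K n m)) (k : Fin (n + 1)) :
    colonF K n m (inIdeal K n m J) (MvPolynomial.X (Sum.inl k))
      ≤ Ideal.span ((fun d => MvPolynomial.monomial d (1 : K)) ''
          {e | MvPolynomial.monomial (e + Finsupp.single (Sum.inl k) 1) (1 : K)
                ∈ inIdeal K n m J}) := by
  intro r hr
  have hrX : r * MvPolynomial.X (Sum.inl k) ∈ inIdeal K n m J :=
    Ideal.mem_colon_span_singleton.mp hr
  apply mem_span_monomial_of_support
  intro e he
  refine ⟨e, ?_, le_refl e⟩
  show MvPolynomial.monomial (e + Finsupp.single (Sum.inl k) 1) (1 : K) ∈ inIdeal K n m J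
  rw [inIdeal_eq_span] at hrX ⊢
  have hsupp : e + Finsupp.single (Sum.inl k) 1
      ∈ (r * MvPolynomial.X (Sum.inl k)).support := by
    rw [MvPolynomial.support_mul_X]
    exact Finset.mem_map.mpr ⟨e, he, rfl⟩
  obtain ⟨s, hs, hle⟩ := MvPolynomial.mem_ideal_span_monomial_image.mp hrX _ hsupp
  exact (monomial_mem_span_iff K n m).mpr ⟨s, hs, hle⟩

lemma sup_le_span (J : Ideal (PolyS K n m)) (k : Fin (n + 1)) :
    inIdeal K n m J ⊔
        myI K n m * colonF K n m (inIdeal K n m J) (MvPolynomial.X (Sum.inl k))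
      ≤ Ideal.span ((fun d => MvPolynomial.monomial d (1 : K)) ''
          (inSet K n m J ∪
            {e | ∃ (j : Fin (m + 1)) (e' : Vars n m →₀ ℕ),
              MvPolynomial.monomial (e' + Finsupp.single (Sum.inl k) 1) (1 : K)
                ∈ inIdeal K n m J ∧ e = Finsupp.single (Sum.inr j) 1 + e'})) := by
  apply sup_le
  · rw [inIdeal_eq_span]
    exact Ideal.span_mono (Set.image_mono (Set.subset_union_left))
  · have h1 : myI K n m * colonF K n m (inIdeal K n m J) (MvPolynomial.X (Sum.inl k))
        ≤ Ideal.span ((fun d => MvPolynomial.monomial d (1 : K)) ''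
            {e | ∃ j : Fin (m + 1), e = Finsupp.single (Sum.inr j) 1})
          * Ideal.span ((fun d => MvPolynomial.monomial d (1 : K)) ''
            {e | MvPolynomial.monomial (e + Finsupp.single (Sum.inl k) 1) (1 : K)
                  ∈ inIdeal K n m J}) := by
      apply Ideal.mul_mono
      · rw [← myI_eq_span]
      · exact colon_le_span K n m J k
    refine le_trans h1 ?_
    rw [Ideal.span_mul_span]
    apply Ideal.span_le.mpr
    rintro q hq
    simp only [Set.mem_mul, Set.mem_iUnion, Set.mem_singleton_iff, Set.mem_image, Set.mem_setOf_eq,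
      exists_prop] at hq
    obtain ⟨q1, ⟨⟨e1, ⟨j, rfl⟩, rfl⟩, q2, ⟨⟨e2, he2, rfl⟩, rfl⟩⟩⟩ := hq
    have : (MvPolynomial.monomial (Finsupp.single (Sum.inr j) 1) (1 : K))
        * MvPolynomial.monomial e2 (1 : K)
        = MvPolynomial.monomial (Finsupp.single (Sum.inr j) 1 + e2) (1 : K) := by
      rw [MvPolynomial.monomial_mul, one_mul]
    rw [this]
    exact Ideal.subset_span ⟨Finsupp.single (Sum.inr j) 1 + e2,
      Or.inr ⟨j, e2, he2, rfl⟩, rfl⟩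

lemma core (I : Ideal (PolyS K n m)) (hI : IsBihomIdeal K n m I) (a b : ℤ) (ha : 1 < a)
    (h2 : ∀ k : Fin (n + 1),
      eqInDeg K n m
        (colonF K n m (inIdeal K n m (I ⊔ firstXVars K n m (k : ℕ)))
          (MvPolynomial.X (Sum.inl k)))
        (inIdeal K n m (I ⊔ firstXVars K n m (k : ℕ)) ⊔
          myI K n m *
            colonF K n m (inIdeal K n m (I ⊔ firstXVars K n m (k : ℕ)))
              (MvPolynomial.X (Sum.inl k)))
        (a - 1) b)
    (d : Vars n m →₀ ℕ) (hd : d ∈ inSet K n m I) (hbd : bdeg n m d = (a, b)) :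
    MvPolynomial.monomial d (1 : K) ∈ (mxI K n m ⊔ myI K n m) * inIdeal K n m I := by
  classical
  -- find the minimal x-variable dividing d
  have hex : ∃ i : Fin (n + 1), d (Sum.inl i) ≠ 0 := by
    by_contra hno
    push_neg at hno
    have : (bdeg n m d).1 = 0 := by
      unfold bdeg
      simp [hno]
    rw [hbd] at this
    omega
  set F : Finset (Fin (n + 1)) := Finset.univ.filter (fun i => d (Sum.inl i) ≠ 0) with hF
  have hFne : F.Nonempty := by
    obtain ⟨i, hi⟩ := hex
    exact ⟨i, by simp [hF, hi]⟩
  set k := F.min' hFne with hk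
  have hk1 : d (Sum.inl k) ≠ 0 := by
    have := F.min'_mem hFne
    simpa [hF] using this
  have hkmin : ∀ j : Fin (n + 1), (j : ℕ) < (k : ℕ) → d (Sum.inl j) = 0 := by
    intro j hj
    by_contra hne
    have : k ≤ j := F.min'_le j (by simp [hF, hne])
    exact absurd hj (not_lt.mpr this)
  set J := I ⊔ firstXVars K n m (k : ℕ) with hJ
  set ek : Vars n m →₀ ℕ := Finsupp.single (Sum.inl k) 1 with hek
  have hekle : ek ≤ d := Finsupp.single_le_iff.mpr (Nat.one_le_iff_ne_zero.mpr hk1)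
  set ν : Vars n m →₀ ℕ := d - ek with hν
  have hνadd : ν + ek = d := tsub_add_cancel_of_le hekle
  have hdJ : d ∈ inSet K n m J := inSet_mono K n m I J le_sup_left hd
  have hmemJ : MvPolynomial.monomial d (1 : K) ∈ inIdeal K n m J := by
    rw [inIdeal_eq_span]
    exact Ideal.subset_span (Set.mem_image_of_mem _ hdJ)
  have hcolon : MvPolynomial.monomial ν (1 : K)
      ∈ colonF K n m (inIdeal K n m J) (MvPolynomial.X (Sum.inl k)) := by
    apply Ideal.mem_colon_span_singleton.mpr
    have : MvPolynomial.monomial ν (1 : K) * MvPolynomial.X (Sum.inl k)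
        = MvPolynomial.monomial d (1 : K) := by
      rw [show (MvPolynomial.X (Sum.inl k) : PolyS K n m)
          = MvPolynomial.monomial ek 1 from rfl, MvPolynomial.monomial_mul, one_mul, hνadd]
    rw [this]
    exact hmemJ
  have hbν : bdeg n m ν = (a - 1, b) := by
    have := bdeg_add n m ν ek
    rw [hνadd, hbd, hek, bdeg_single_x] at this
    have h1 : (a, b).1 = (bdeg n m ν + (1, 0)).1 := by rw [this]
    have h2' : (a, b).2 = (bdeg n m ν + (1, 0)).2 := by rw [this]
    simp only [Prod.fst_add, Prod.snd_add] at h1 h2'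
    ext <;> simp <;> omega
  have hνbihom : IsBihomOf K n m (MvPolynomial.monomial ν (1 : K)) (a - 1) b := by
    intro e he
    rw [MvPolynomial.support_monomial, if_neg (one_ne_zero)] at he
    rw [Finset.mem_singleton] at he
    rw [he, hbν]
  have hνmem := (h2 k (MvPolynomial.monomial ν (1 : K)) hνbihom).mp hcolon
  have hνmem' := sup_le_span K n m J k hνmem
  obtain ⟨u, hu, hule⟩ := (monomial_mem_span_iff K n m).mp hνmem'
  have hνfree : ∀ j : Fin (n + 1), (j : ℕ) < (k : ℕ) → ν (Sum.inl j) = 0 := by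
    intro j hj
    have h1 : ν (Sum.inl j) ≤ d (Sum.inl j) := by
      rw [hν, Finsupp.tsub_apply]
      exact Nat.sub_le _ _
    rw [hkmin j hj] at h1
    omega
  rcases hu with huIn | ⟨j, e', he', rfl⟩
  · -- case: u is a lead exponent for J
    have hufree : ∀ j : Fin (n + 1), (j : ℕ) < (k : ℕ) → u (Sum.inl j) = 0 := by
      intro j hj
      have := hule (Sum.inl j)
      have := hνfree j hj
      omega
    have huI : MvPolynomial.monomial u (1 : K) ∈ inIdeal K n m I :=
      leadA K n m I hI (k : ℕ) u huIn hufree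
    apply mem_mul_of K n m I u d (Sum.inl k) huI
    calc Finsupp.single (Sum.inl k) 1 + u = ek + u := rfl
      _ ≤ ek + ν := add_le_add_right hule ek
      _ = d := by rw [add_comm, hνadd]
  · -- case: u = y_j * e', with x_k e' in in(J)
    rw [inIdeal_eq_span] at he'
    obtain ⟨d', hd'In, hd'le⟩ := (monomial_mem_span_iff K n m).mp he'
    have he'le : e' ≤ ν := le_trans (le_add_self) hule
    have hd'free : ∀ j' : Fin (n + 1), (j' : ℕ) < (k : ℕ) → d' (Sum.inl j') = 0 := by
      intro j' hj'
      have h1 := hd'le (Sum.inl j')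
      have h2' : e' (Sum.inl j') ≤ ν (Sum.inl j') := he'le (Sum.inl j')
      have h3 := hνfree j' hj'
      have h4 : ek (Sum.inl j') = 0 := by
        rw [hek, Finsupp.single_apply, if_neg]
        intro hcon
        have hval : (k : ℕ) = (j' : ℕ) := congrArg Fin.val (Sum.inl.inj hcon)
        omega
      have h6 : (e' + ek) (Sum.inl j') = e' (Sum.inl j') := by
        rw [Finsupp.add_apply, h4, add_zero]
      rw [h6] at h1
      omega
    have hd'I : MvPolynomial.monomial d' (1 : K) ∈ inIdeal K n m I :=
      leadA K n m I hI (k : ℕ) d' hd'In hd'free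
    apply mem_mul_of K n m I d' d (Sum.inr j) hd'I
    calc Finsupp.single (Sum.inr j) 1 + d'
        ≤ Finsupp.single (Sum.inr j) 1 + (e' + ek) := add_le_add_right hd'le _
      _ = (Finsupp.single (Sum.inr j) 1 + e') + ek := by rw [add_assoc]
      _ ≤ ν + ek := add_le_add_left hule ek
      _ = d := hνadd

end Aux

theorem statement_12 [CharZero K] (hn : 1 ≤ n) (hm : 1 ≤ m)
    (I : Ideal (PolyS K n m)) (hI : IsBihomIdeal K n m I)
    (a b : ℤ) (ha : 1 < a) (hb : 0 ≤ b)
    (h2 : ∀ k : Fin (n + 1),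
      eqInDeg K n m
        (colonF K n m (inIdeal K n m (I ⊔ firstXVars K n m (k : ℕ))) (X (Sum.inl k)))
        (inIdeal K n m (I ⊔ firstXVars K n m (k : ℕ)) ⊔
          myI K n m *
            colonF K n m (inIdeal K n m (I ⊔ firstXVars K n m (k : ℕ))) (X (Sum.inl k)))
        (a - 1) b) :
    ¬ HasMinGen K n m (inIdeal K n m I) a b := by
  unfold HasMinGen
  rw [not_not]
  intro p hp
  constructor
  · intro hpmem
    have hspan := hpmem
    rw [Aux.inIdeal_eq_span] at hspan
    have hsup := MvPolynomial.mem_ideal_span_monomial_image.mp hspan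
    rw [p.as_sum]
    apply Ideal.sum_mem
    intro v hv
    have hmono1 : MvPolynomial.monomial v (1 : K)
        ∈ (mxI K n m ⊔ myI K n m) * inIdeal K n m I := by
      obtain ⟨u, hu, hle⟩ := hsup v hv
      rcases eq_or_ne u v with rfl | hne
      · exact Aux.core K n m I hI a b ha h2 u hu (hp u hv)
      · have hvu : v - u ≠ 0 := by
          intro h0
          exact hne (le_antisymm hle (tsub_eq_zero_iff_le.mp h0))
        obtain ⟨s, hs⟩ := Finsupp.ne_iff.mp hvu
        have hs' : (v - u) s ≠ 0 := by simpa using hs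
        have hsle : Finsupp.single s 1 + u ≤ v := by
          have h1 : Finsupp.single s 1 ≤ v - u :=
            Finsupp.single_le_iff.mpr (Nat.one_le_iff_ne_zero.mpr hs')
          calc Finsupp.single s 1 + u ≤ (v - u) + u := add_le_add_left h1 u
            _ = v := tsub_add_cancel_of_le hle
        have huI : MvPolynomial.monomial u (1 : K) ∈ inIdeal K n m I := by
          rw [Aux.inIdeal_eq_span]
          exact Ideal.subset_span (Set.mem_image_of_mem _ hu)
        exact Aux.mem_mul_of K n m I u v s huI hsle
    have hCmul : MvPolynomial.monomial v (MvPolynomial.coeff v p)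
        = MvPolynomial.C (MvPolynomial.coeff v p) * MvPolynomial.monomial v 1 := by
      rw [MvPolynomial.C_mul_monomial, mul_one]
    rw [hCmul]
    exact Ideal.mul_mem_left _ _ hmono1
  · intro h
    exact Ideal.mul_le_right h

end Bigraded
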